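/- Identity relating K_a with shifted arguments: for a set w̄ = w̄_I ∪ w̄_II partitioned with #w̄_I = b, #w̄_II = a, where w̄_I = s̄_I ∪ (x̄_II + 0) and w̄_II = s̄_II ∪ x̄_I with #s̄_II = #x̄_II = k, one has (-1)^a K_a(w̄_II - c | x̄) = (-1)^k K_k(s̄_II - c | x̄_II) = (-1)^b K_b(s̄ - c | w̄_I), where the sets are s̄ = s̄_I ∪ s̄_II (size b) and x̄ = x̄_I ∪ x̄_II (size a), and K_m(ū - c | v̄) means K_m evaluated with each u shifted by -c. -/

import Mathlib

open Finset Filter Topology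

noncomputable def gf (c x y : ℂ) : ℂ := c / (x - y)
noncomputable def ff (c x y : ℂ) : ℂ := (x - y + c) / (x - y)
noncomputable def hf (c x y : ℂ) : ℂ := (x - y + c) / c
noncomputable def tf (c x y : ℂ) : ℂ := c ^ 2 / ((x - y) * (x - y + c))

noncomputable def K (c : ℂ) (n : ℕ) (x y : Fin n → ℂ) : ℂ :=
  (∏ j : Fin n, ∏ k ∈ Finset.univ.filter (fun k => k < j), gf c (x j) (x k)) *
  (∏ j : Fin n, ∏ k ∈ Finset.univ.filter (fun k => j < k), gf c (y j) (y k)) *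
  (∏ j : Fin n, ∏ k : Fin n, hf c (x j) (y k)) *
  Matrix.det (Matrix.of fun j k => tf c (x j) (y k))

noncomputable def Dmat (c : ℂ) (q k : ℕ) (w y : Fin (q+k) → ℂ) (ε : ℂ) :
    Matrix (Fin (q+k)) (Fin (q+k)) ℂ :=
  Matrix.of fun j m => if (j:ℕ) < q then
    (if j = m then c^2/(ε - c) else ε * tf c (w j - c + ε) (y m))
    else tf c (w j - c + ε) (y m)

noncomputable def Hp (c : ℂ) (q k : ℕ) (w y : Fin (q+k) → ℂ) (ε : ℂ) : ℂ :=
  ∏ j : Fin (q+k), ∏ m : Fin (q+k), if (j:ℕ) < q ∧ j = m then 1 else (w j - y m + ε)/c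

noncomputable def GG (c : ℂ) (q k : ℕ) (w y : Fin (q+k) → ℂ) (ε : ℂ) : ℂ :=
  (-1:ℂ)^(q+k) *
  ((∏ j : Fin (q+k), ∏ m ∈ Finset.univ.filter (fun m => m < j), gf c (w j) (w m)) *
  (∏ j : Fin (q+k), ∏ m ∈ Finset.univ.filter (fun m => j < m), gf c (y j) (y m)) *
  Hp c q k w y ε * (1/c)^q * (Dmat c q k w y ε).det)

lemma prod_ite_lt_q {M : Type*} [CommMonoid M] (q k : ℕ) (z : M) :
    (∏ j : Fin (q+k), if (j:ℕ) < q then z else 1) = z^q := by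
  rw [Fin.prod_univ_add]
  simp

lemma Hsplit (c : ℂ) (q k : ℕ) (w y : Fin (q+k) → ℂ)
    (hQ : ∀ j : Fin (q+k), (j:ℕ) < q → w j = y j) (ε : ℂ) :
    (∏ j : Fin (q+k), ∏ m : Fin (q+k), hf c (w j - c + ε) (y m))
      = (ε/c)^q * Hp c q k w y ε := by
  have key : ∀ j m : Fin (q+k), hf c (w j - c + ε) (y m)
      = (if (j:ℕ) < q ∧ j = m then ε/c else 1)
        * (if (j:ℕ) < q ∧ j = m then 1 else (w j - y m + ε)/c) := by
    intro j m
    by_cases h : (j:ℕ) < q ∧ j = m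
    · obtain ⟨h1, rfl⟩ := h
      simp only [and_true, if_pos h1, hf, hQ j h1, mul_one]
      ring
    · simp only [if_neg h, hf, one_mul]
      ring
  simp_rw [key, Finset.prod_mul_distrib]
  congr 1
  have inner : ∀ j : Fin (q+k),
      (∏ m : Fin (q+k), if (j:ℕ) < q ∧ j = m then ε/c else 1)
        = if (j:ℕ) < q then ε/c else 1 := by
    intro j
    by_cases hj : (j:ℕ) < q
    · simp [hj]
    · simp [hj]
  simp_rw [inner]
  exact prod_ite_lt_q q k (ε/c)

lemma L1 (c : ℂ) (hc : c ≠ 0) (q k : ℕ) (w y : Fin (q+k) → ℂ)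
    (hQ : ∀ j : Fin (q+k), (j:ℕ) < q → w j = y j) (ε : ℂ) (hε : ε ≠ 0) :
    (-1:ℂ)^(q+k) * K c (q+k) (fun i => w i - c + ε) y = GG c q k w y ε := by
  have hA : (∏ j : Fin (q+k), ∏ m ∈ Finset.univ.filter (fun m => m < j),
      gf c (w j - c + ε) (w m - c + ε))
      = ∏ j : Fin (q+k), ∏ m ∈ Finset.univ.filter (fun m => m < j), gf c (w j) (w m) := by
    refine Finset.prod_congr rfl fun j _ => Finset.prod_congr rfl fun m _ => ?_
    unfold gf; congr 1; ring
  have hD : (Dmat c q k w y ε).det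
      = ε^q * (Matrix.of fun j m => tf c (w j - c + ε) (y m)).det := by
    have hDe : Dmat c q k w y ε
        = Matrix.of (fun (j m : Fin (q+k)) => (if (j:ℕ) < q then ε else 1) * tf c (w j - c + ε) (y m)) := by
      ext j m
      simp only [Dmat, Matrix.of_apply]
      by_cases hj : (j:ℕ) < q
      · rw [if_pos hj, if_pos hj]
        by_cases hjm : j = m
        · subst hjm
          rw [if_pos rfl]
          have : tf c (w j - c + ε) (y j) = c^2 / ((ε - c) * ε) := by
            unfold tf
            rw [hQ j hj]
            congr 1; ring
          rw [this, mul_div_assoc', mul_comm (ε-c) ε, mul_div_mul_left _ _ hε]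
        · rw [if_neg hjm]
      · rw [if_neg hj, if_neg hj, one_mul]
    have hmc := Matrix.det_mul_column (fun j : Fin (q+k) => if (j:ℕ) < q then ε else 1)
      (Matrix.of fun j m => tf c (w j - c + ε) (y m))
    simp only [Matrix.of_apply] at hmc
    rw [hDe, hmc, prod_ite_lt_q]
  unfold K GG
  rw [hA, Hsplit c q k w y hQ ε, hD]
  ring

lemma L2 (c : ℂ) (hc : c ≠ 0) (q k : ℕ) (w y : Fin (q+k) → ℂ)
    (H3 : ∀ j m : Fin (q+k), w j = y m → ((j:ℕ) < q ∧ j = m))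
    (H4 : ∀ j m : Fin (q+k), w j - y m ≠ c) :
    ContinuousAt (GG c q k w y) 0 := by
  have hne : ∀ j m : Fin (q+k), (w j - c + 0 - y m) * (w j - c + 0 - y m + c) ≠ 0 ∨
      ((j:ℕ) < q ∧ j = m) := by
    intro j m
    by_cases h : (j:ℕ) < q ∧ j = m
    · exact Or.inr h
    · refine Or.inl (mul_ne_zero ?_ ?_)
      · intro he
        exact H4 j m (by linear_combination he)
      · intro he
        exact h (H3 j m (by linear_combination he))
  have hHp : Continuous (fun ε => Hp c q k w y ε) := by
    unfold Hp
    apply continuous_finset_prod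
    intro j _
    apply continuous_finset_prod
    intro m _
    by_cases h : (j:ℕ) < q ∧ j = m
    · simp only [if_pos h]; exact continuous_const
    · simp only [if_neg h]
      exact ((continuous_const.sub continuous_const).add continuous_id).div_const c
  have hd : ContinuousAt (fun ε => Dmat c q k w y ε) 0 := by
    apply continuousAt_pi.2
    intro j
    apply continuousAt_pi.2
    intro m
    simp only [Dmat, Matrix.of_apply]
    by_cases hj : (j:ℕ) < q
    · by_cases hjm : j = m
      · simp only [if_pos hj, if_pos hjm]
        refine ContinuousAt.div continuousAt_const (by fun_prop) ?_
        simpa using hc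
      · simp only [if_pos hj, if_neg hjm]
        simp only [tf]
        refine ContinuousAt.mul continuousAt_id
          (ContinuousAt.div continuousAt_const (by fun_prop) ?_)
        rcases hne j m with h | h
        · exact h
        · exact absurd h.2 hjm
    · simp only [if_neg hj, tf]
      refine ContinuousAt.div continuousAt_const (by fun_prop) ?_
      rcases hne j m with h | h
      · exact h
      · exact absurd h.1 hj
  have hdet : ContinuousAt (fun ε => (Dmat c q k w y ε).det) 0 :=
    (Continuous.matrix_det continuous_id).continuousAt.comp hd
  unfold GG
  exact continuousAt_const.mul
    ((((continuousAt_const.mul continuousAt_const).mul hHp.continuousAt).mul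
      continuousAt_const).mul hdet)

lemma L3a (c : ℂ) (hc : c ≠ 0) (q k : ℕ) (a : Fin q → ℂ) (s x : Fin k → ℂ)
    (w y : Fin (q+k) → ℂ) (hw : w = Fin.append a s) (hy : y = Fin.append a x) :
    (Dmat c q k w y 0).det
      = (-c)^q * (Matrix.of fun (i m : Fin k) => tf c (s i - c) (x m)).det := by
  rw [← Matrix.det_submatrix_equiv_self (finSumFinEquiv (m := q) (n := k))
    (Dmat c q k w y 0)]
  have hblock : (Dmat c q k w y 0).submatrix finSumFinEquiv finSumFinEquiv
      = Matrix.fromBlocks (Matrix.diagonal fun _ : Fin q => -c) 0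
          (Matrix.of fun (i : Fin k) (j : Fin q) => tf c (w (Fin.natAdd q i) - c + 0) (y (Fin.castAdd k j)))
          (Matrix.of fun (i m : Fin k) => tf c (s i - c) (x m)) := by
    have hdiv : c^2/(0 - c) = -c := by
      rw [zero_sub, div_neg, pow_two, mul_div_assoc, div_self hc, mul_one]
    ext i j
    rcases i with i | i <;> rcases j with j | j <;>
      simp only [Matrix.submatrix_apply, finSumFinEquiv_apply_left,
        finSumFinEquiv_apply_right, Matrix.fromBlocks_apply₁₁, Matrix.fromBlocks_apply₁₂,
        Matrix.fromBlocks_apply₂₁, Matrix.fromBlocks_apply₂₂, Dmat, Matrix.of_apply]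
    · rw [if_pos (by simp [Fin.is_lt] : ((Fin.castAdd k i : Fin (q+k)) : ℕ) < q)]
      by_cases hij : i = j
      · subst hij
        rw [if_pos rfl, hdiv, Matrix.diagonal_apply_eq]
      · rw [if_neg (by simp [Fin.ext_iff]; omega : ¬ (Fin.castAdd k i : Fin (q+k)) = Fin.castAdd k j),
          Matrix.diagonal_apply_ne _ hij, zero_mul]
    · rw [if_pos (by simp [Fin.is_lt] : ((Fin.castAdd k i : Fin (q+k)) : ℕ) < q),
        if_neg (by simp [Fin.ext_iff]; omega : ¬ (Fin.castAdd k i : Fin (q+k)) = Fin.natAdd q j),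
        zero_mul]
      rfl
    · rw [if_neg (by simp : ¬ ((Fin.natAdd q i : Fin (q+k)) : ℕ) < q)]
    · rw [if_neg (by simp : ¬ ((Fin.natAdd q i : Fin (q+k)) : ℕ) < q), hw, hy,
        Fin.append_right, Fin.append_right, add_zero]
  rw [hblock, Matrix.det_fromBlocks_zero₁₂, Matrix.det_diagonal, Finset.prod_const,
    Finset.card_univ, Fintype.card_fin]

noncomputable def Phi (c : ℂ) (q k : ℕ) (a : Fin q → ℂ) (s x : Fin k → ℂ)
    (j m : Fin (q+k)) : ℂ :=
  ((if m < j then gf c (Fin.append a s j) (Fin.append a s m) else 1) *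
   (if j < m then gf c (Fin.append a x j) (Fin.append a x m) else 1)) *
  (if (j:ℕ) < q ∧ j = m then 1 else (Fin.append a s j - Fin.append a x m + 0)/c)

lemma PhiQQ (c : ℂ) (hc : c ≠ 0) (q k : ℕ) (a : Fin q → ℂ) (s x : Fin k → ℂ)
    (H1 : ∀ j m : Fin (q+k), j ≠ m → Fin.append a s j ≠ Fin.append a s m)
    (j m : Fin q) : Phi c q k a s x (Fin.castAdd k j) (Fin.castAdd k m) = 1 := by
  have hne : a j ≠ a m ∨ j = m := by
    by_cases hjm : j = m
    · exact Or.inr hjm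
    · refine Or.inl ?_
      have := H1 (Fin.castAdd k j) (Fin.castAdd k m)
        (by simp only [ne_eq, Fin.ext_iff, Fin.coe_castAdd]; exact fun h => hjm (Fin.ext h))
      simpa [Fin.append_left] using this
  simp only [Phi, Fin.append_left, Fin.lt_def, Fin.coe_castAdd, Fin.is_lt, true_and,
    Fin.ext_iff]
  rcases lt_trichotomy (j:ℕ) (m:ℕ) with h | h | h
  · have hne' : a j - a m ≠ 0 :=
      sub_ne_zero.2 (hne.resolve_right (by intro hh; subst hh; omega))
    rw [if_neg (by omega), if_pos h, if_neg (by omega), one_mul, gf]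
    field_simp
    ring
  · rw [if_neg (by omega), if_neg (by omega), if_pos h, one_mul, one_mul]
  · have hne' : a j - a m ≠ 0 :=
      sub_ne_zero.2 (hne.resolve_right (by intro hh; subst hh; omega))
    rw [if_pos h, if_neg (by omega), if_neg (by omega), mul_one, gf]
    field_simp
    ring

lemma PhiQR (c : ℂ) (hc : c ≠ 0) (q k : ℕ) (a : Fin q → ℂ) (s x : Fin k → ℂ)
    (H3 : ∀ j m : Fin (q+k), Fin.append a s j = Fin.append a x m → ((j:ℕ) < q ∧ j = m))
    (j : Fin q) (m : Fin k) : Phi c q k a s x (Fin.castAdd k j) (Fin.natAdd q m) = 1 := by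
  have hne : a j - x m ≠ 0 := by
    refine sub_ne_zero.2 fun hax => ?_
    have := (H3 (Fin.castAdd k j) (Fin.natAdd q m)
      (by rw [Fin.append_left, Fin.append_right]; exact hax)).2
    rw [Fin.ext_iff] at this
    simp only [Fin.coe_castAdd, Fin.coe_natAdd] at this
    have := j.is_lt
    omega
  simp only [Phi, Fin.append_left, Fin.append_right, Fin.lt_def, Fin.coe_castAdd,
    Fin.coe_natAdd, Fin.ext_iff]
  have hj := j.is_lt
  rw [if_neg (by omega), if_pos (by omega), if_neg (by omega), one_mul, gf]
  field_simp
  ring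

lemma PhiRQ (c : ℂ) (hc : c ≠ 0) (q k : ℕ) (a : Fin q → ℂ) (s x : Fin k → ℂ)
    (H3 : ∀ j m : Fin (q+k), Fin.append a s j = Fin.append a x m → ((j:ℕ) < q ∧ j = m))
    (j : Fin k) (m : Fin q) : Phi c q k a s x (Fin.natAdd q j) (Fin.castAdd k m) = 1 := by
  have hne : s j - a m ≠ 0 := by
    refine sub_ne_zero.2 fun hax => ?_
    have := (H3 (Fin.natAdd q j) (Fin.castAdd k m)
      (by rw [Fin.append_left, Fin.append_right]; exact hax)).1
    simp only [Fin.coe_natAdd] at this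
    omega
  simp only [Phi, Fin.append_left, Fin.append_right, Fin.lt_def, Fin.coe_castAdd,
    Fin.coe_natAdd, Fin.ext_iff]
  have hm := m.is_lt
  rw [if_pos (by omega), if_neg (by omega), if_neg (by omega), mul_one, gf]
  field_simp
  ring

lemma PhiRR (c : ℂ) (q k : ℕ) (a : Fin q → ℂ) (s x : Fin k → ℂ) (j m : Fin k) :
    Phi c q k a s x (Fin.natAdd q j) (Fin.natAdd q m)
      = ((if m < j then gf c (s j - c) (s m - c) else 1) *
         (if j < m then gf c (x j) (x m) else 1)) * hf c (s j - c) (x m) := by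
  have h1 : (Fin.natAdd q m : Fin (q+k)) < Fin.natAdd q j ↔ m < j := by
    rw [Fin.lt_def, Fin.lt_def]
    simp only [Fin.coe_natAdd]
    omega
  have h2 : (Fin.natAdd q j : Fin (q+k)) < Fin.natAdd q m ↔ j < m := by
    rw [Fin.lt_def, Fin.lt_def]
    simp only [Fin.coe_natAdd]
    omega
  simp only [Phi, Fin.append_right, h1, h2,
    if_neg (by simp : ¬ (((Fin.natAdd q j : Fin (q+k)) : ℕ) < q ∧ Fin.natAdd q j = Fin.natAdd q m))]
  congr 1
  · congr 1
    by_cases h : m < j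
    · rw [if_pos h, if_pos h, gf, gf]
      congr 1
      ring
    · rw [if_neg h, if_neg h]
  · rw [hf]
    ring

lemma L3b (c : ℂ) (hc : c ≠ 0) (q k : ℕ) (a : Fin q → ℂ) (s x : Fin k → ℂ)
    (H1 : ∀ j m : Fin (q+k), j ≠ m → Fin.append a s j ≠ Fin.append a s m)
    (H3 : ∀ j m : Fin (q+k), Fin.append a s j = Fin.append a x m → ((j:ℕ) < q ∧ j = m)) :
    (∏ j : Fin (q+k), ∏ m ∈ Finset.univ.filter (fun m => m < j),
        gf c (Fin.append a s j) (Fin.append a s m)) *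
    (∏ j : Fin (q+k), ∏ m ∈ Finset.univ.filter (fun m => j < m),
        gf c (Fin.append a x j) (Fin.append a x m)) *
    Hp c q k (Fin.append a s) (Fin.append a x) 0
    = (∏ j : Fin k, ∏ m ∈ Finset.univ.filter (fun m => m < j), gf c (s j - c) (s m - c)) *
      (∏ j : Fin k, ∏ m ∈ Finset.univ.filter (fun m => j < m), gf c (x j) (x m)) *
      (∏ j : Fin k, ∏ m : Fin k, hf c (s j - c) (x m)) := by
  unfold Hp
  simp only [Finset.prod_filter]
  simp_rw [← Finset.prod_mul_distrib]
  have hL : (∏ j : Fin (q+k), ∏ m : Fin (q+k),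
      ((if m < j then gf c (Fin.append a s j) (Fin.append a s m) else 1) *
       (if j < m then gf c (Fin.append a x j) (Fin.append a x m) else 1)) *
      (if (j:ℕ) < q ∧ j = m then 1 else (Fin.append a s j - Fin.append a x m + 0)/c))
      = ∏ j : Fin (q+k), ∏ m : Fin (q+k), Phi c q k a s x j m := rfl
  rw [hL]
  have inner1 : ∀ j : Fin q, (∏ m : Fin (q+k), Phi c q k a s x (Fin.castAdd k j) m) = 1 := by
    intro j
    rw [Fin.prod_univ_add (f := fun m => Phi c q k a s x (Fin.castAdd k j) m)]
    rw [Finset.prod_eq_one (fun m _ => PhiQQ c hc q k a s x H1 j m),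
      Finset.prod_eq_one (fun m _ => PhiQR c hc q k a s x H3 j m), one_mul]
  have inner2 : ∀ j : Fin k, (∏ m : Fin (q+k), Phi c q k a s x (Fin.natAdd q j) m)
      = ∏ m : Fin k, ((if m < j then gf c (s j - c) (s m - c) else 1) *
         (if j < m then gf c (x j) (x m) else 1)) * hf c (s j - c) (x m) := by
    intro j
    rw [Fin.prod_univ_add (f := fun m => Phi c q k a s x (Fin.natAdd q j) m)]
    rw [Finset.prod_eq_one (fun m _ => PhiRQ c hc q k a s x H3 j m), one_mul]
    exact Finset.prod_congr rfl fun m _ => PhiRR c q k a s x j m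
  rw [Fin.prod_univ_add (f := fun j => ∏ m : Fin (q+k), Phi c q k a s x j m)]
  rw [Finset.prod_eq_one (fun j _ => inner1 j), one_mul]
  exact Finset.prod_congr rfl fun j _ => inner2 j

lemma signjuggle (c : ℂ) (hc : c ≠ 0) (q k : ℕ) (P d : ℂ) :
    (-1:ℂ)^(q+k) * (P * (1/c)^q * ((-c)^q * d)) = (-1)^k * (P * d) := by
  have h1 : ((1/c:ℂ)) * (-c) = -1 := by field_simp
  have h2 : ((1/c:ℂ))^q * (-c)^q = (-1)^q := by rw [← mul_pow, h1]
  have h3 : ((-1:ℂ))^(q+k) * (-1)^q = (-1)^k := by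
    rw [← pow_add, show q+k+q = 2*q+k by ring, pow_add, pow_mul, neg_one_sq, one_pow,
      one_mul]
  calc (-1:ℂ)^(q+k) * (P * (1/c)^q * ((-c)^q * d))
      = ((-1:ℂ)^(q+k) * ((1/c)^q * (-c)^q)) * (P * d) := by ring
    _ = ((-1:ℂ)^(q+k) * (-1)^q) * (P * d) := by rw [h2]
    _ = (-1:ℂ)^k * (P * d) := by rw [h3]

lemma L3 (c : ℂ) (hc : c ≠ 0) (q k : ℕ) (a : Fin q → ℂ) (s x : Fin k → ℂ)
    (H1 : ∀ j m : Fin (q+k), j ≠ m → Fin.append a s j ≠ Fin.append a s m)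
    (H3 : ∀ j m : Fin (q+k), Fin.append a s j = Fin.append a x m → ((j:ℕ) < q ∧ j = m)) :
    GG c q k (Fin.append a s) (Fin.append a x) 0
      = (-1:ℂ)^k * K c k (fun i => s i - c) x := by
  have hK : K c k (fun i => s i - c) x
      = ((∏ j : Fin k, ∏ m ∈ Finset.univ.filter (fun m => m < j),
            gf c (s j - c) (s m - c)) *
         (∏ j : Fin k, ∏ m ∈ Finset.univ.filter (fun m => j < m), gf c (x j) (x m)) *
         (∏ j : Fin k, ∏ m : Fin k, hf c (s j - c) (x m))) *
        (Matrix.of fun (i m : Fin k) => tf c (s i - c) (x m)).det := rfl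
  rw [hK, ← L3b c hc q k a s x H1 H3]
  unfold GG
  rw [L3a c hc q k a s x _ _ rfl rfl]
  exact signjuggle c hc q k _ _

lemma core (c : ℂ) (hc : c ≠ 0) (q k : ℕ) (a : Fin q → ℂ) (s x : Fin k → ℂ)
    (H1 : ∀ j m : Fin (q+k), j ≠ m → Fin.append a s j ≠ Fin.append a s m)
    (H3 : ∀ j m : Fin (q+k), Fin.append a s j = Fin.append a x m → ((j:ℕ) < q ∧ j = m))
    (H4 : ∀ j m : Fin (q+k), Fin.append a s j - Fin.append a x m ≠ c) :
    Tendsto (fun ε : ℂ => (-1:ℂ)^(q+k) *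
        K c (q+k) (fun i => Fin.append a s i - c + ε) (Fin.append a x))
      (𝓝[≠] 0) (𝓝 ((-1:ℂ)^k * K c k (fun i => s i - c) x)) := by
  have hQ : ∀ j : Fin (q+k), (j:ℕ) < q → Fin.append a s j = Fin.append a x j := by
    intro j hj
    have hj' : j = Fin.castAdd k ⟨(j:ℕ), hj⟩ := by
      simp [Fin.ext_iff]
    rw [hj', Fin.append_left, Fin.append_left]
  have h2 : Tendsto (GG c q k (Fin.append a s) (Fin.append a x)) (𝓝[≠] 0)
      (𝓝 ((-1:ℂ)^k * K c k (fun i => s i - c) x)) := by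
    rw [← L3 c hc q k a s x H1 H3]
    exact (L2 c hc q k _ _ H3 H4).tendsto.mono_left nhdsWithin_le_nhds
  refine h2.congr' ?_
  filter_upwards [self_mem_nhdsWithin] with ε hε
  exact (L1 c hc q k _ _ hQ ε (by simpa using hε)).symm

lemma inst {N : ℕ} (c : ℂ) (hc : c ≠ 0) (u : Fin N → ℂ)
    (hgen : ∀ i j, i ≠ j → u i ≠ u j ∧ u i - u j ≠ c)
    (q k : ℕ) (a : Fin q → ℂ) (s x : Fin k → ℂ)
    (ιw ιy : Fin (q+k) → Fin N)
    (hwu : ∀ j, u (ιw j) = Fin.append a s j)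
    (hyu : ∀ j, u (ιy j) = Fin.append a x j)
    (hww : Function.Injective ιw)
    (hwy : ∀ j m, ιw j = ιy m ↔ ((j:ℕ) < q ∧ j = m)) :
    (∀ j m : Fin (q+k), j ≠ m → Fin.append a s j ≠ Fin.append a s m) ∧
    (∀ j m : Fin (q+k), Fin.append a s j = Fin.append a x m → ((j:ℕ) < q ∧ j = m)) ∧
    (∀ j m : Fin (q+k), Fin.append a s j - Fin.append a x m ≠ c) := by
  refine ⟨?_, ?_, ?_⟩
  · intro j m hjm h
    exact (hgen (ιw j) (ιw m) (fun hh => hjm (hww hh))).1 (by rw [hwu, hwu, h])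
  · intro j m h
    by_contra hcon
    have hne : ιw j ≠ ιy m := fun hh => hcon ((hwy j m).1 hh)
    exact (hgen _ _ hne).1 (by rw [hwu, hyu, h])
  · intro j m h
    by_cases hh : ιw j = ιy m
    · have heq : Fin.append a s j = Fin.append a x m := by rw [← hwu, ← hyu, hh]
      rw [heq, sub_self] at h
      exact hc h.symm
    · have := (hgen _ _ hh).2
      rw [hwu, hyu] at this
      exact this h

theorem stmt15 (c : ℂ) (hc : c ≠ 0) (p q k : ℕ)
    (sI : Fin p → ℂ) (sII : Fin k → ℂ) (xI : Fin q → ℂ) (xII : Fin k → ℂ)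
    (u : Fin ((p + k) + (q + k)) → ℂ)
    (hu : u = Fin.append (Fin.append sI sII) (Fin.append xI xII))
    (hgen : ∀ i j, i ≠ j → u i ≠ u j ∧ u i - u j ≠ c) :
    Tendsto (fun ε : ℂ => (-1 : ℂ) ^ (q + k) *
        K c (q + k) (fun i => Fin.append xI sII i - c + ε) (Fin.append xI xII))
      (𝓝[≠] 0)
      (𝓝 ((-1 : ℂ) ^ k * K c k (fun i => sII i - c) xII)) ∧
    Tendsto (fun ε : ℂ => (-1 : ℂ) ^ (p + k) *
        K c (p + k) (fun i => Fin.append sI sII i - c + ε) (Fin.append sI xII))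
      (𝓝[≠] 0)
      (𝓝 ((-1 : ℂ) ^ k * K c k (fun i => sII i - c) xII)) := by
  constructor
  · obtain ⟨H1, H3, H4⟩ := inst c hc u hgen q k xI sII xII
      (Fin.append (fun i : Fin q => Fin.natAdd (p+k) (Fin.castAdd k i))
        (fun i : Fin k => Fin.castAdd (q+k) (Fin.natAdd p i)))
      (Fin.append (fun i : Fin q => Fin.natAdd (p+k) (Fin.castAdd k i))
        (fun i : Fin k => Fin.natAdd (p+k) (Fin.natAdd q i)))
      (by
        intro j
        refine Fin.addCases (fun i => ?_) (fun i => ?_) j <;>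
          simp [hu, Fin.append_left, Fin.append_right])
      (by
        intro j
        refine Fin.addCases (fun i => ?_) (fun i => ?_) j <;>
          simp [hu, Fin.append_left, Fin.append_right])
      (by
        intro j m
        refine Fin.addCases (fun i => Fin.addCases (fun i' => ?_) (fun i' => ?_) m)
          (fun i => Fin.addCases (fun i' => ?_) (fun i' => ?_) m) j <;>
        · intro h
          simp only [Fin.append_left, Fin.append_right, Fin.ext_iff, Fin.coe_natAdd,
            Fin.coe_castAdd] at h ⊢
          omega)
      (by
        intro j m
        refine Fin.addCases (fun i => Fin.addCases (fun i' => ?_) (fun i' => ?_) m)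
          (fun i => Fin.addCases (fun i' => ?_) (fun i' => ?_) m) j <;>
        · simp only [Fin.append_left, Fin.append_right, Fin.ext_iff, Fin.coe_natAdd,
            Fin.coe_castAdd]
          omega)
    exact core c hc q k xI sII xII H1 H3 H4
  · obtain ⟨H1, H3, H4⟩ := inst c hc u hgen p k sI sII xII
      (Fin.append (fun i : Fin p => Fin.castAdd (q+k) (Fin.castAdd k i))
        (fun i : Fin k => Fin.castAdd (q+k) (Fin.natAdd p i)))
      (Fin.append (fun i : Fin p => Fin.castAdd (q+k) (Fin.castAdd k i))
        (fun i : Fin k => Fin.natAdd (p+k) (Fin.natAdd q i)))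
      (by
        intro j
        refine Fin.addCases (fun i => ?_) (fun i => ?_) j <;>
          simp [hu, Fin.append_left, Fin.append_right])
      (by
        intro j
        refine Fin.addCases (fun i => ?_) (fun i => ?_) j <;>
          simp [hu, Fin.append_left, Fin.append_right])
      (by
        intro j m
        refine Fin.addCases (fun i => Fin.addCases (fun i' => ?_) (fun i' => ?_) m)
          (fun i => Fin.addCases (fun i' => ?_) (fun i' => ?_) m) j <;>
        · intro h
          simp only [Fin.append_left, Fin.append_right, Fin.ext_iff, Fin.coe_natAdd,
            Fin.coe_castAdd] at h ⊢
          omega)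
      (by
        intro j m
        refine Fin.addCases (fun i => Fin.addCases (fun i' => ?_) (fun i' => ?_) m)
          (fun i => Fin.addCases (fun i' => ?_) (fun i' => ?_) m) j <;>
        · simp only [Fin.append_left, Fin.append_right, Fin.ext_iff, Fin.coe_natAdd,
            Fin.coe_castAdd]
          omega)
    exact core c hc p k sI sII xII H1 H3 H4
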